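/- Let M be a selfadjoint positive semidefinite linear operator on a finite-dimensional real inner product space Z. Then for every z in Z, ‖M z‖*_M = ‖z‖_M, where ‖·‖_M is the seminorm induced by M and ‖·‖*_M is its dual seminorm. -/

import Mathlib

open RealInnerProductSpace

lemma psd_cauchy_schwarz {Z : Type*} [NormedAddCommGroup Z] [InnerProductSpace ℝ Z]
    (M : Z →ₗ[ℝ] Z)
    (hsym : ∀ u v : Z, ⟪M u, v⟫ = ⟪u, M v⟫)
    (hpsd : ∀ u : Z, 0 ≤ ⟪M u, u⟫) (u v : Z) :
    ⟪M u, v⟫ ≤ Real.sqrt ⟪M u, u⟫ * Real.sqrt ⟪M v, v⟫ := by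
  have key : ∀ t : ℝ, 0 ≤ ⟪M v, v⟫ * (t * t) + (2 * ⟪M u, v⟫) * t + ⟪M u, u⟫ := by
    intro t
    have h := hpsd (u + t • v)
    have hvu : ⟪M v, u⟫ = ⟪M u, v⟫ := by
      rw [hsym v u, real_inner_comm]
    simp only [map_add, map_smul, inner_add_left, inner_add_right,
      real_inner_smul_left, real_inner_smul_right] at h
    rw [hvu] at h
    nlinarith [h]
  have hd : discrim ⟪M v, v⟫ (2 * ⟪M u, v⟫) ⟪M u, u⟫ ≤ 0 := by
    rcases eq_or_lt_of_le (hpsd v) with hv | hv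
    · -- a = 0 case: linear function nonneg for all t forces b = 0
      have hb : ⟪M u, v⟫ = 0 := by
        by_contra hb
        have := key ((-⟪M u, u⟫ - 1) / (2 * ⟪M u, v⟫))
        rw [← hv] at this
        field_simp at this
        rw [le_div_iff₀ (lt_of_le_of_ne (sq_nonneg _) (Ne.symm (pow_ne_zero 2 hb)))] at this
        rcases lt_or_gt_of_ne hb with h1 | h1 <;> nlinarith [this]
      rw [discrim, hb, ← hv]
      ring_nf
      nlinarith [hpsd u]
    · exact discrim_le_zero key
  rw [discrim] at hd
  have hb2 : ⟪M u, v⟫ ^ 2 ≤ ⟪M u, u⟫ * ⟪M v, v⟫ := by nlinarith [hd]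
  calc ⟪M u, v⟫ ≤ |⟪M u, v⟫| := le_abs_self _
    _ = Real.sqrt (⟪M u, v⟫ ^ 2) := (Real.sqrt_sq_eq_abs _).symm
    _ ≤ Real.sqrt (⟪M u, u⟫ * ⟪M v, v⟫) := Real.sqrt_le_sqrt hb2
    _ = Real.sqrt ⟪M u, u⟫ * Real.sqrt ⟪M v, v⟫ := Real.sqrt_mul (hpsd u) _

theorem stmt3 {Z : Type*} [NormedAddCommGroup Z] [InnerProductSpace ℝ Z]
    [FiniteDimensional ℝ Z] (M : Z →ₗ[ℝ] Z)
    (hsym : ∀ u v : Z, ⟪M u, v⟫ = ⟪u, M v⟫)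
    (hpsd : ∀ u : Z, 0 ≤ ⟪M u, u⟫) (z : Z) :
    (⨆ (z' : Z) (_ : Real.sqrt ⟪M z', z'⟫ ≤ 1), ENNReal.ofReal ⟪M z, z'⟫) =
      ENNReal.ofReal (Real.sqrt ⟪M z, z⟫) := by
  apply le_antisymm
  · apply iSup₂_le
    intro z' hz'
    have h := psd_cauchy_schwarz M hsym hpsd z z'
    apply ENNReal.ofReal_le_ofReal
    calc ⟪M z, z'⟫ ≤ Real.sqrt ⟪M z, z⟫ * Real.sqrt ⟪M z', z'⟫ := h
      _ ≤ Real.sqrt ⟪M z, z⟫ * 1 :=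
        mul_le_mul_of_nonneg_left hz' (Real.sqrt_nonneg _)
      _ = Real.sqrt ⟪M z, z⟫ := mul_one _
  · set s := Real.sqrt ⟪M z, z⟫ with hs
    rcases eq_or_lt_of_le (Real.sqrt_nonneg ⟪M z, z⟫) with h0 | h0
    · rw [hs, ← h0]
      simp
    · have hs2 : s ^ 2 = ⟪M z, z⟫ := Real.sq_sqrt (hpsd z)
      have hzz : ⟪M (s⁻¹ • z), s⁻¹ • z⟫ = s⁻¹ * (s⁻¹ * ⟪M z, z⟫) := by
        rw [map_smul, real_inner_smul_left, real_inner_smul_right]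
      have hone : Real.sqrt ⟪M (s⁻¹ • z), s⁻¹ • z⟫ ≤ 1 := by
        rw [hzz, ← hs2]
        have hsne : s ≠ 0 := ne_of_gt h0
        have : s⁻¹ * (s⁻¹ * s ^ 2) = 1 := by field_simp
        rw [this, Real.sqrt_one]
      have hsne : s ≠ 0 := ne_of_gt h0
      have hval : ⟪M z, s⁻¹ • z⟫ = s := by
        rw [real_inner_smul_right, ← hs2]
        field_simp
      calc ENNReal.ofReal s = ENNReal.ofReal ⟪M z, s⁻¹ • z⟫ := by rw [hval]
        _ ≤ ⨆ (z' : Z) (_ : Real.sqrt ⟪M z', z'⟫ ≤ 1), ENNReal.ofReal ⟪M z, z'⟫ :=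
          le_iSup₂_of_le (s⁻¹ • z) hone le_rfl
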